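/- arXiv:2006.16325 — 3 statements merged into one kernel-verified Lean document; each statement's English description precedes it below -/
import Mathlib

section
/- Let t₀ ≥ 0, δ > 0, σ > 0 and b < 0. Let T₁ ∈ (t₀, ∞] and let J : [t₀, T₁) → (0, ∞) be a nonincreasing differentiable function satisfying J'(t)² ≥ σ + b·J(t)^{2 + 1/δ} for all t ∈ [t₀, T₁), where [t₀, T₁) is the maximal interval of positivity of J (that is, either T₁ = ∞, or T₁ < ∞ and lim_{t→T₁⁻} J(t) = 0). If J(t₀) < min{1, √(σ/(−b))}, then T₁ is finite, lim_{t→T₁⁻} J(t) = 0, and writing T* = T₁ one has the upper bound T* ≤ t₀ + (1/√(−b))·ln( √(σ/(−b)) / ( √(σ/(−b)) − J(t₀) ) ). -/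
open Filter

/-- Lemma 4(i) of the paper: if `J : [t₀, T₁) → (0,∞)` is nonincreasing, differentiable,
satisfies `J'(t)² ≥ σ + b J(t)^{2+1/δ}` with `σ > 0`, `b < 0`, `[t₀,T₁)` is the maximal
interval of positivity of `J`, and `J(t₀) < min{1, √(σ/(-b))}`, then `T₁ = T* < ∞`,
`J(t) → 0` as `t → T*⁻`, and
`T* ≤ t₀ + (1/√(-b)) log( √(σ/(-b)) / (√(σ/(-b)) - J(t₀)) )`. -/
theorem stmt_1 (t₀ δ σ b : ℝ) (ht₀ : 0 ≤ t₀) (hδ : 0 < δ) (hσ : 0 < σ) (hb : b < 0)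
    (T₁ : EReal) (hT₁ : (t₀ : EReal) < T₁)
    (J J' : ℝ → ℝ)
    (hpos : ∀ t : ℝ, t₀ ≤ t → (t : EReal) < T₁ → 0 < J t)
    (hmono : ∀ s t : ℝ, t₀ ≤ s → s ≤ t → (t : EReal) < T₁ → J t ≤ J s)
    (hderiv : ∀ t : ℝ, t₀ ≤ t → (t : EReal) < T₁ → HasDerivAt J (J' t) t)
    (hineq : ∀ t : ℝ, t₀ ≤ t → (t : EReal) < T₁ →
      (J' t) ^ 2 ≥ σ + b * (J t) ^ (2 + 1 / δ : ℝ))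
    (hmax : T₁ = ⊤ ∨ ∃ T : ℝ, T₁ = (T : EReal) ∧
      Tendsto J (nhdsWithin T (Set.Iio T)) (nhds 0))
    (hsmall : J t₀ < min 1 (Real.sqrt (σ / (-b)))) :
    ∃ T : ℝ, T₁ = (T : EReal) ∧
      Tendsto J (nhdsWithin T (Set.Iio T)) (nhds 0) ∧
      T ≤ t₀ + (1 / Real.sqrt (-b)) *
        Real.log (Real.sqrt (σ / (-b)) / (Real.sqrt (σ / (-b)) - J t₀)) := by
  have hb' : (0:ℝ) < -b := neg_pos.2 hb
  obtain ⟨β, hβdef⟩ : ∃ x : ℝ, x = Real.sqrt (-b) := ⟨_, rfl⟩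
  obtain ⟨K, hKdef⟩ : ∃ x : ℝ, x = Real.sqrt (σ / -b) := ⟨_, rfl⟩
  have hβ : 0 < β := hβdef ▸ Real.sqrt_pos.2 hb'
  have hK : 0 < K := hKdef ▸ Real.sqrt_pos.2 (div_pos hσ hb')
  have hβ2 : β ^ 2 = -b := by rw [hβdef]; exact Real.sq_sqrt hb'.le
  have hK2 : (-b) * K ^ 2 = σ := by
    rw [hKdef, Real.sq_sqrt (div_pos hσ hb').le]
    field_simp
    exact div_self hb.ne
  have hJt₀pos : 0 < J t₀ := hpos t₀ le_rfl hT₁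
  have hJt₀K : J t₀ < K := hKdef ▸ lt_of_lt_of_le hsmall (min_le_right _ _)
  have hJt₀1 : J t₀ < 1 := lt_of_lt_of_le hsmall (min_le_left _ _)
  have hKJ : 0 < K - J t₀ := by linarith
  obtain ⟨B, hBdef⟩ : ∃ x : ℝ,
      x = t₀ + (1 / β) * Real.log (K / (K - J t₀)) := ⟨_, rfl⟩
  have hlogpos : 0 ≤ Real.log (K / (K - J t₀)) := by
    apply Real.log_nonneg
    rw [le_div_iff₀ hKJ]; linarith
  have hBt₀ : t₀ ≤ B := by
    have h : 0 ≤ (1 / β) * Real.log (K / (K - J t₀)) :=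
      mul_nonneg (by positivity) hlogpos
    linarith [hBdef.ge]
  -- main estimate
  have key : ∀ s : ℝ, t₀ ≤ s → (s : EReal) < T₁ → s ≤ B := by
    intro s hst hsT
    have hin : ∀ t, t ∈ Set.Icc t₀ s → (t : EReal) < T₁ := by
      intro t ht
      exact lt_of_le_of_lt (EReal.coe_le_coe_iff.2 ht.2) hsT
    have hJb : ∀ t, t ∈ Set.Icc t₀ s → 0 < J t ∧ J t < K ∧ J t < 1 := by
      intro t ht
      have h1 := hpos t ht.1 (hin t ht)
      have h2 := hmono t₀ t le_rfl ht.1 (hin t ht)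
      exact ⟨h1, lt_of_le_of_lt h2 hJt₀K, lt_of_le_of_lt h2 hJt₀1⟩
    have hJ'le : ∀ t, t ∈ Set.Ioo t₀ s → J' t ≤ 0 := by
      intro t ht
      have htT : (t : EReal) < T₁ := hin t ⟨ht.1.le, ht.2.le⟩
      have hd := hderiv t ht.1.le htT
      have hts : Tendsto (slope J t) (nhdsWithin t (Set.Ioi t)) (nhds (J' t)) :=
        (hasDerivAt_iff_tendsto_slope.1 hd).mono_left
          (nhdsWithin_mono t (fun y hy => ne_of_gt hy))
      refine le_of_tendsto hts ?_
      filter_upwards [Ioo_mem_nhdsGT ht.2] with y hy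
      have hyT : (y : EReal) < T₁ := hin y ⟨(ht.1.trans hy.1).le, hy.2.le⟩
      have : J y ≤ J t := hmono t y ht.1.le hy.1.le hyT
      rw [slope_def_field]
      exact div_nonpos_of_nonpos_of_nonneg (by linarith) (by linarith [hy.1])
    have hbd : ∀ t, t ∈ Set.Ioo t₀ s → β * (K - J t) ≤ -(J' t) := by
      intro t ht
      have htI : t ∈ Set.Icc t₀ s := ⟨ht.1.le, ht.2.le⟩
      obtain ⟨hJ0, hJK, hJ1⟩ := hJb t htI
      have htT : (t : EReal) < T₁ := hin t htI
      have h1 : (J t) ^ (2 + 1 / δ : ℝ) ≤ (J t) ^ (2 : ℝ) :=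
        Real.rpow_le_rpow_of_exponent_ge hJ0 hJ1.le
          (by have := one_div_pos.2 hδ; linarith)
      have h2 : (J t) ^ (2:ℝ) = (J t) ^ 2 := by
        rw [show (2:ℝ) = ((2:ℕ):ℝ) by norm_num, Real.rpow_natCast]
      rw [h2] at h1
      have hb1 : b * (J t) ^ 2 ≤ b * (J t) ^ (2 + 1 / δ : ℝ) :=
        mul_le_mul_of_nonpos_left h1 hb.le
      have h3 : σ + b * (J t) ^ 2 ≤ (J' t) ^ 2 := by
        have := hineq t htI.1 htT
        linarith
      have h4 : (β * (K - J t)) ^ 2 ≤ (J' t) ^ 2 := by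
        have hexp : (β * (K - J t)) ^ 2 = (-b) * (K - J t)^2 := by
          rw [mul_pow, hβ2]
        nlinarith [hK2, hJ0, hJK]
      have h5 : 0 ≤ β * (K - J t) := mul_nonneg hβ.le (by linarith)
      calc β * (K - J t) = Real.sqrt ((β * (K - J t))^2) := (Real.sqrt_sq h5).symm
        _ ≤ Real.sqrt ((J' t)^2) := Real.sqrt_le_sqrt h4
        _ = |J' t| := Real.sqrt_sq_eq_abs _
        _ = -(J' t) := abs_of_nonpos (hJ'le t ht)
    -- monotone comparison function
    have hgmono : MonotoneOn (fun u => Real.log (K - J u) - β * u) (Set.Icc t₀ s) := by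
      apply monotoneOn_of_hasDerivWithinAt_nonneg (f' := fun u => -(J' u)/(K - J u) - β)
        (convex_Icc t₀ s)
      · intro t ht
        have hd := hderiv t ht.1 (hin t ht)
        have hpos' : K - J t ≠ 0 := by
          have := (hJb t ht).2.1; intro h
          have := sub_eq_zero.1 h; linarith
        exact ((((hd.continuousAt).continuousWithinAt.const_sub K).log
          hpos').sub ((continuous_const.mul continuous_id).continuousOn t ht))
      · intro t ht
        rw [interior_Icc] at ht
        have htI : t ∈ Set.Icc t₀ s := ⟨ht.1.le, ht.2.le⟩
        have hd := hderiv t htI.1 (hin t htI)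
        have hpos' : K - J t ≠ 0 := by
          have := (hJb t htI).2.1; intro h
          have := sub_eq_zero.1 h; linarith
        have h1 : HasDerivAt (fun u => K - J u) (-(J' t)) t := hd.const_sub K
        have h2 : HasDerivAt (fun u => Real.log (K - J u)) (-(J' t)/(K - J t)) t :=
          h1.log hpos'
        have h3 : HasDerivAt (fun u => β * u) β t := by
          simpa using (hasDerivAt_id t).const_mul β
        exact ((h2.sub h3).hasDerivWithinAt)
      · intro t ht
        rw [interior_Icc] at ht
        have hJK := (hJb t ⟨ht.1.le, ht.2.le⟩).2.1
        have hKJt : 0 < K - J t := by linarith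
        have := hbd t ht
        rw [sub_nonneg, le_div_iff₀ hKJt]
        linarith
    have hgle : Real.log (K - J t₀) - β * t₀ ≤ Real.log (K - J s) - β * s :=
      hgmono (Set.left_mem_Icc.2 hst) (Set.right_mem_Icc.2 hst) hst
    have hJs : 0 < J s := hpos s hst hsT
    have hKJs : 0 < K - J s := by
      have := (hJb s (Set.right_mem_Icc.2 hst)).2.1; linarith
    have hlogle : Real.log (K - J s) ≤ Real.log K :=
      Real.log_le_log hKJs (by linarith)
    have hβs : β * s ≤ β * t₀ + Real.log (K / (K - J t₀)) := by
      rw [Real.log_div (ne_of_gt hK) (ne_of_gt hKJ)]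
      linarith
    have h6 : s - t₀ ≤ Real.log (K / (K - J t₀)) / β := by
      rw [le_div_iff₀ hβ]; nlinarith [hβs]
    have h7 : Real.log (K / (K - J t₀)) / β = 1 / β * Real.log (K / (K - J t₀)) := by
      ring
    linarith [hBdef.ge]
  -- conclude
  rcases hmax with h | ⟨T, hTeq, hTlim⟩
  · exfalso
    have h1 : (max t₀ (B + 1) : EReal) < T₁ := by rw [h]; exact EReal.coe_lt_top _
    have h2 := key (max t₀ (B + 1)) (le_max_left _ _) h1
    have := le_max_right t₀ (B + 1)
    linarith
  · refine ⟨T, hTeq, hTlim, ?_⟩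
    have hgoal : T ≤ B := by
      by_contra hc
      push_neg at hc
      rw [hTeq] at hT₁
      have ht₀T : t₀ < T := EReal.coe_lt_coe_iff.1 hT₁
      have h1 : t₀ ≤ (B + T)/2 := by linarith
      have h2 : (((B + T)/2 : ℝ) : EReal) < T₁ := by
        rw [hTeq]; exact EReal.coe_lt_coe_iff.2 (by linarith)
      have := key _ h1 h2
      linarith
    rw [hBdef, hβdef, hKdef] at hgoal
    exact hgoal
end

section
/- Let 0 < α < 1, η ≥ 0, let v : [0, ∞) → ℝ be continuous, and set φ(ξ, t) = ∫₀ᵗ μ(ξ) e^{−(ξ²+η)(t−s)} v(s) ds for ξ ∈ ℝ, t ≥ 0, and ϱ = sin(απ)/π. Then for every t > 0 the output O(t) = ϱ ∫_{−∞}^{+∞} φ(ξ, t) μ(ξ) dξ is well defined (the integral converges absolutely) and satisfies O(t) = I^{1−α,η} v (t) = (1/Γ(1−α)) ∫₀ᵗ (t−s)^{−α} e^{−η(t−s)} v(s) ds. -/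
open MeasureTheory Real Set

lemma aux_integrable {q u : ℝ} (hq : -1 < q) (hu : 0 < u) :
    Integrable (fun ξ : ℝ => |ξ| ^ q * Real.exp (-u * ξ ^ 2)) := by
  have h0 : IntegrableOn (fun ξ : ℝ => |ξ| ^ q * Real.exp (-u * ξ ^ 2)) (Set.Ioi 0) := by
    refine (integrableOn_rpow_mul_exp_neg_mul_sq hu hq).congr_fun (fun x hx => ?_)
      measurableSet_Ioi
    rw [abs_of_pos hx]
  have h1 : IntegrableOn (fun ξ : ℝ => |ξ| ^ q * Real.exp (-u * ξ ^ 2)) (Set.Iic 0) := by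
    rw [← Measure.map_neg_eq_self (volume : Measure ℝ)]
    have m : MeasurableEmbedding fun x : ℝ => -x := (Homeomorph.neg ℝ).measurableEmbedding
    rw [m.integrableOn_map_iff]
    simp only [Function.comp_def, abs_neg, neg_sq, neg_preimage, neg_Iic, neg_zero]
    exact Iff.mpr integrableOn_Ici_iff_integrableOn_Ioi h0
  rw [← integrableOn_univ, ← Set.Iic_union_Ioi (a := (0:ℝ)), integrableOn_union]
  exact ⟨h1, h0⟩

lemma aux_integral {α u : ℝ} (hα0 : 0 < α) (hu : 0 < u) :
    ∫ ξ : ℝ, |ξ| ^ (2 * α - 1) * Real.exp (-u * ξ ^ 2)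
      = Real.Gamma α * u ^ (-α) := by
  have h1 : (∫ ξ : ℝ, |ξ| ^ (2 * α - 1) * Real.exp (-u * ξ ^ 2))
      = ∫ ξ : ℝ, (fun x : ℝ => x ^ (2 * α - 1) * Real.exp (-u * x ^ 2)) |ξ| := by
    congr 1; funext ξ; simp only [sq_abs]
  rw [h1, integral_comp_abs (f := fun x : ℝ => x ^ (2 * α - 1) * Real.exp (-u * x ^ 2))]
  have h2 := integral_rpow_mul_exp_neg_mul_rpow (p := 2) (q := 2 * α - 1) (b := u)
    two_pos (by linarith) hu
  have h3 : ∀ x : ℝ, x ^ (2:ℝ) = x ^ (2:ℕ) := fun x => by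
    rw [← Real.rpow_natCast x 2]; norm_num
  simp_rw [h3] at h2
  rw [h2, show (2 * α - 1 + 1) / 2 = α by ring, show -(2 * α - 1 + 1) / 2 = -α by ring]
  ring

lemma aux_refl {α : ℝ} (hα0 : 0 < α) (hα1 : α < 1) :
    Real.sin (α * Real.pi) / Real.pi * Real.Gamma α = 1 / Real.Gamma (1 - α) := by
  have h := Real.Gamma_mul_Gamma_one_sub α
  have hs : 0 < Real.sin (Real.pi * α) := by
    apply Real.sin_pos_of_pos_of_lt_pi
    · positivity
    · nlinarith [Real.pi_pos]
  have hΓ : 0 < Real.Gamma (1 - α) := Real.Gamma_pos_of_pos (by linarith)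
  have hπ : (0:ℝ) < Real.pi := Real.pi_pos
  rw [mul_comm α Real.pi]
  have key : Real.Gamma α * Real.Gamma (1 - α) * Real.sin (Real.pi * α) = Real.pi := by
    rw [h]; field_simp
  field_simp
  linear_combination key

/-- Theorem 1 of the paper (Mbodje's diffusive representation): with
`μ(ξ) = |ξ|^{(2α-1)/2}`, `ϱ = sin(απ)/π` and
`φ(ξ,t) = ∫₀ᵗ μ(ξ) e^{-(ξ²+η)(t-s)} v(s) ds`, for every `t > 0` the output
`O(t) = ϱ ∫_ℝ φ(ξ,t) μ(ξ) dξ` is well defined and equals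
`I^{1-α,η} v(t) = (1/Γ(1-α)) ∫₀ᵗ (t-s)^{-α} e^{-η(t-s)} v(s) ds`. -/
theorem stmt_9 (α η : ℝ) (hα0 : 0 < α) (hα1 : α < 1) (hη : 0 ≤ η)
    (v : ℝ → ℝ) (hv : ContinuousOn v (Set.Ici (0 : ℝ)))
    (φ : ℝ → ℝ → ℝ)
    (hφ : ∀ ξ t : ℝ, φ ξ t =
      ∫ s in (0 : ℝ)..t, |ξ| ^ ((2 * α - 1) / 2) * Real.exp (-(ξ ^ 2 + η) * (t - s)) * v s) :
    ∀ t > (0 : ℝ),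
      Integrable (fun ξ : ℝ => φ ξ t * |ξ| ^ ((2 * α - 1) / 2)) volume ∧
      (Real.sin (α * Real.pi) / Real.pi) *
          (∫ ξ : ℝ, φ ξ t * |ξ| ^ ((2 * α - 1) / 2)) =
        (1 / Real.Gamma (1 - α)) *
          ∫ s in (0 : ℝ)..t, (t - s) ^ (-α) * Real.exp (-η * (t - s)) * v s := by
  intro t ht
  set ν : Measure ℝ := volume.restrict (Set.Ioc 0 t) with hν
  set G : ℝ × ℝ → ℝ := fun z =>
    |z.1| ^ (2 * α - 1) * Real.exp (-(z.1 ^ 2 + η) * (t - z.2)) * v z.2 with hGdef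
  have hq : (-1:ℝ) < 2 * α - 1 := by linarith
  -- bound for v on [0, t]
  obtain ⟨M, hM⟩ := (isCompact_Icc (a := (0:ℝ)) (b := t)).exists_bound_of_continuousOn
    (hv.mono (Set.Icc_subset_Ici_self))
  -- a.e. facts about ν
  have hνt : ∀ᵐ s ∂ν, s ≠ t := by
    refine ae_iff.2 (measure_mono_null (fun s hs => ?_) (t := {t}) ?_)
    · simpa using hs
    · exact le_antisymm ((Measure.restrict_le_self) _ |>.trans_eq (measure_singleton t)) bot_le
  -- measurability
  have hm : AEStronglyMeasurable G (volume.prod ν) := by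
    have hv' : AEStronglyMeasurable v ν :=
      (hv.mono (Set.Ioc_subset_Icc_self.trans Set.Icc_subset_Ici_self)).aestronglyMeasurable measurableSet_Ioc
    have hv2 : AEStronglyMeasurable (fun z : ℝ × ℝ => v z.2) (volume.prod ν) :=
      hv'.comp_quasiMeasurePreserving Measure.quasiMeasurePreserving_snd
    have hc : Measurable (fun z : ℝ × ℝ =>
        |z.1| ^ (2 * α - 1) * Real.exp (-(z.1 ^ 2 + η) * (t - z.2))) := by
      apply Measurable.mul
      · exact (measurable_fst.abs.pow measurable_const)
      · exact ((((measurable_fst.pow measurable_const).add_const η).neg.mul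
          (measurable_const.sub measurable_snd)).exp)
    exact (hc.aestronglyMeasurable.mul hv2)
  -- pointwise rewriting for fixed s with s < t
  have hGs : ∀ s : ℝ, s < t → (fun ξ : ℝ => G (ξ, s)) =
      fun ξ : ℝ => (|ξ| ^ (2 * α - 1) * Real.exp (-(t - s) * ξ ^ 2)) *
        (Real.exp (-η * (t - s)) * v s) := by
    intro s hs
    funext ξ
    simp only [hGdef]
    rw [show -(ξ ^ 2 + η) * (t - s) = (-(t - s) * ξ ^ 2) + (-η * (t - s)) by ring, Real.exp_add]
    ring
  -- integrability on the product
  have hG : Integrable G (volume.prod ν) := by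
    rw [integrable_prod_iff' hm]
    constructor
    · filter_upwards [ae_restrict_mem measurableSet_Ioc, hνt] with s hs hst
      have hu : 0 < t - s := by cases lt_or_eq_of_le hs.2 with
        | inl h => linarith
        | inr h => exact absurd h hst
      rw [hGs s (by linarith)]
      exact (aux_integrable hq hu).mul_const _
    · -- integrable bound
      have hb : IntegrableOn (fun s : ℝ => (t - s) ^ (-α)) (Set.Ioc 0 t) := by
        have h1 : IntervalIntegrable (fun x : ℝ => x ^ (-α)) volume t 0 :=
          intervalIntegral.intervalIntegrable_rpow' (by linarith)
        have h2 := h1.comp_sub_left t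
        simp only [sub_self, sub_zero] at h2
        exact (intervalIntegrable_iff_integrableOn_Ioc_of_le ht.le).mp h2
      have hbM : Integrable (fun s : ℝ => (M * Real.Gamma α) * (t - s) ^ (-α)) ν :=
        hb.const_mul _
      apply Integrable.mono' hbM
      · exact (hm.norm.prod_swap).integral_prod_right'
      · filter_upwards [ae_restrict_mem measurableSet_Ioc, hνt] with s hs hst
        have hu : 0 < t - s := lt_of_le_of_ne (by linarith [hs.2]) (fun h => hst (by linarith))
        have hnorm : (fun ξ : ℝ => ‖G (ξ, s)‖) =
            fun ξ : ℝ => (|ξ| ^ (2 * α - 1) * Real.exp (-(t - s) * ξ ^ 2)) *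
              (Real.exp (-η * (t - s)) * |v s|) := by
          funext ξ
          rw [Real.norm_eq_abs, hGdef]
          simp only
          rw [abs_mul, abs_mul, abs_of_nonneg (Real.rpow_nonneg (abs_nonneg ξ) _),
            abs_of_pos (Real.exp_pos _),
            show -(ξ ^ 2 + η) * (t - s) = (-(t - s) * ξ ^ 2) + (-η * (t - s)) by ring,
            Real.exp_add]
          ring
        have hval : (∫ ξ : ℝ, ‖G (ξ, s)‖) =
            (Real.Gamma α * (t - s) ^ (-α)) * (Real.exp (-η * (t - s)) * |v s|) := by
          rw [hnorm, integral_mul_const, aux_integral hα0 hu]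
        rw [Real.norm_eq_abs, abs_of_nonneg (integral_nonneg fun ξ => norm_nonneg _), hval]
        have h1 : Real.exp (-η * (t - s)) ≤ 1 := Real.exp_le_one_iff.2 (by nlinarith)
        have h2 : |v s| ≤ M := by
          have := hM s ⟨hs.1.le, hs.2⟩
          simpa [Real.norm_eq_abs] using this
        have h3 : (0:ℝ) ≤ Real.Gamma α * (t - s) ^ (-α) :=
          mul_nonneg (Real.Gamma_pos_of_pos hα0).le (Real.rpow_nonneg hu.le _)
        have h4 : Real.exp (-η * (t - s)) * |v s| ≤ M :=
          le_trans (mul_le_mul h1 le_rfl (abs_nonneg _) zero_le_one) (by simpa using h2)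
        calc (Real.Gamma α * (t - s) ^ (-α)) * (Real.exp (-η * (t - s)) * |v s|)
            ≤ (Real.Gamma α * (t - s) ^ (-α)) * M := mul_le_mul_of_nonneg_left h4 h3
          _ = (M * Real.Gamma α) * (t - s) ^ (-α) := by ring
  -- the a.e. identification of the output integrand
  have hae : (fun ξ : ℝ => φ ξ t * |ξ| ^ ((2 * α - 1) / 2)) =ᵐ[volume]
      fun ξ : ℝ => ∫ s, G (ξ, s) ∂ν := by
    have h0 : ∀ᵐ ξ : ℝ ∂volume, ξ ≠ 0 := by
      refine ae_iff.2 ?_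
      simp only [ne_eq, not_not, Set.setOf_eq_eq_singleton]
      exact measure_singleton 0
    filter_upwards [h0] with ξ hξ
    rw [hφ ξ t, intervalIntegral.integral_of_le ht.le, ← integral_mul_const]
    refine integral_congr_ae (Filter.Eventually.of_forall fun s => ?_)
    have habs : |ξ| ^ ((2 * α - 1) / 2) * |ξ| ^ ((2 * α - 1) / 2) = |ξ| ^ (2 * α - 1) := by
      rw [← Real.rpow_add (abs_pos.2 hξ)]
      norm_num
    simp only [hGdef]
    rw [show |ξ| ^ ((2 * α - 1) / 2) * Real.exp (-(ξ ^ 2 + η) * (t - s)) * v s *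
        |ξ| ^ ((2 * α - 1) / 2) =
        (|ξ| ^ ((2 * α - 1) / 2) * |ξ| ^ ((2 * α - 1) / 2)) *
          Real.exp (-(ξ ^ 2 + η) * (t - s)) * v s from by ring, habs]
  constructor
  · exact hG.integral_prod_left.congr hae.symm
  · rw [integral_congr_ae hae]
    have hswap : (∫ ξ : ℝ, ∫ s, G (ξ, s) ∂ν) = ∫ s, (∫ ξ : ℝ, G (ξ, s)) ∂ν :=
      integral_integral_swap (f := fun ξ s => G (ξ, s)) hG
    rw [hswap]
    have hin : (∫ s, (∫ ξ : ℝ, G (ξ, s)) ∂ν) =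
        ∫ s, Real.Gamma α * ((t - s) ^ (-α) * Real.exp (-η * (t - s)) * v s) ∂ν := by
      refine integral_congr_ae ?_
      filter_upwards [ae_restrict_mem measurableSet_Ioc, hνt] with s hs hst
      have hu : 0 < t - s := lt_of_le_of_ne (by linarith [hs.2]) (fun h => hst (by linarith))
      rw [hGs s (by linarith), integral_mul_const, aux_integral hα0 hu]
      ring
    rw [hin, integral_const_mul, intervalIntegral.integral_of_le ht.le, ← mul_assoc,
      aux_refl hα0 hα1]
end

section
/- Let 0 < α < 1, η ≥ 0, T > 0, and let w : [0, T) → ℝ be continuous with |w(s)| ≤ M for all s ∈ [0, T) and some constant M ≥ 0. Define φ(ξ, t) = ∫₀ᵗ μ(ξ) e^{−(ξ²+η)(t−s)} w(s) ds and H(t) = ∫₀ᵗ ∫_{−∞}^{+∞} (ξ² + η) ( ∫₀^s φ(ξ, z) dz )² dξ ds for t ∈ [0, T). Then there exists a finite constant C (depending only on α, η, M and T) such that H(t) ≤ C < +∞ for all t ∈ [0, T). -/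
open MeasureTheory


private lemma my_integrable_abs_comp {f : ℝ → ℝ} (hf : IntegrableOn f (Set.Ioi (0:ℝ))) :
    Integrable (fun x => f |x|) := by
  have hf' : IntegrableOn (fun x => f |x|) (Set.Ioi (0:ℝ)) := by
    apply hf.congr_fun (fun x hx => ?_) measurableSet_Ioi
    rw [abs_of_pos hx]
  have int_Iic : IntegrableOn (fun x ↦ f |x|) (Set.Iic (0:ℝ)) := by
    rw [← Measure.map_neg_eq_self (volume : Measure ℝ)]
    have m : MeasurableEmbedding fun x : ℝ => -x := (Homeomorph.neg ℝ).measurableEmbedding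
    rw [m.integrableOn_map_iff]
    simp_rw [Function.comp_def, abs_neg, Set.neg_preimage, Set.neg_Iic, neg_zero]
    exact Iff.mpr integrableOn_Ici_iff_integrableOn_Ioi hf'
  have h2 := int_Iic.union hf'
  rwa [Set.Iic_union_Ioi, integrableOn_univ] at h2

private lemma my_dom_integrable (α η T : ℝ) (hα0 : 0 < α) (hα1 : α < 1) (hη : 0 ≤ η)
    (hT : 0 < T) :
    Integrable (fun x : ℝ => |x| ^ (2*α-1) * min T ((x^2+η)⁻¹)) := by
  have hG : Measurable (fun y : ℝ => y ^ (2*α-1) * min T ((y^2+η)⁻¹)) := by fun_prop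
  have key : IntegrableOn (fun y : ℝ => y ^ (2*α-1) * min T ((y^2+η)⁻¹)) (Set.Ioi (0:ℝ)) := by
    rw [← Set.Ioc_union_Ioi_eq_Ioi (zero_le_one (α := ℝ))]
    apply IntegrableOn.union
    · have base : IntegrableOn (fun y : ℝ => y ^ (2*α-1)) (Set.Ioc (0:ℝ) 1) := by
        have := intervalIntegral.intervalIntegrable_rpow' (a := 0) (b := 1)
          (by linarith : (-1:ℝ) < 2*α-1)
        rwa [intervalIntegrable_iff, Set.uIoc_of_le zero_le_one] at this
      apply Integrable.mono (base.const_mul T) (hG.aestronglyMeasurable.restrict)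
      filter_upwards [ae_restrict_mem measurableSet_Ioc] with y hy
      have hy0 : (0:ℝ) < y := hy.1
      have h1 : (0:ℝ) ≤ y ^ (2*α-1) := Real.rpow_nonneg hy0.le _
      have h2 : (0:ℝ) ≤ min T ((y^2+η)⁻¹) := le_min hT.le (by positivity)
      rw [Real.norm_eq_abs, Real.norm_eq_abs, abs_of_nonneg (by positivity),
        abs_of_nonneg (by positivity)]
      calc y ^ (2*α-1) * min T ((y^2+η)⁻¹) ≤ y ^ (2*α-1) * T :=
            mul_le_mul_of_nonneg_left (min_le_left _ _) h1
        _ = T * y ^ (2*α-1) := mul_comm _ _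
    · have base : IntegrableOn (fun y : ℝ => y ^ (2*α-3)) (Set.Ioi (1:ℝ)) :=
        integrableOn_Ioi_rpow_of_lt (by linarith) one_pos
      apply Integrable.mono base (hG.aestronglyMeasurable.restrict)
      filter_upwards [ae_restrict_mem measurableSet_Ioi] with y hy
      have hy1 : (1:ℝ) < y := hy
      have hy0 : (0:ℝ) < y := lt_trans one_pos hy1
      have h1 : (0:ℝ) ≤ y ^ (2*α-1) := Real.rpow_nonneg hy0.le _
      have h2 : (0:ℝ) ≤ min T ((y^2+η)⁻¹) := le_min hT.le (by positivity)
      rw [Real.norm_eq_abs, Real.norm_eq_abs, abs_of_nonneg (by positivity),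
        abs_of_nonneg (Real.rpow_nonneg hy0.le _)]
      have hmin : min T ((y^2+η)⁻¹) ≤ (y^2)⁻¹ := by
        refine le_trans (min_le_right _ _) ?_
        apply inv_anti₀ (by positivity)
        linarith
      calc y ^ (2*α-1) * min T ((y^2+η)⁻¹) ≤ y ^ (2*α-1) * (y^2)⁻¹ :=
            mul_le_mul_of_nonneg_left hmin h1
        _ = y ^ (2*α-3) := by
            rw [← Real.rpow_two, ← Real.rpow_neg hy0.le, ← Real.rpow_add hy0]
            ring_nf
  have h := my_integrable_abs_comp key
  simpa [sq_abs] using h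

private lemma my_exp_integral (a z : ℝ) (ha : 0 < a) :
    ∫ s in (0:ℝ)..z, Real.exp (-a * (z - s)) = a⁻¹ * (1 - Real.exp (-a * z)) := by
  have hderiv : ∀ s ∈ Set.uIcc (0:ℝ) z,
      HasDerivAt (fun s => a⁻¹ * Real.exp (-a * (z - s))) (Real.exp (-a * (z - s))) s := by
    intro s _
    have h1 : HasDerivAt (fun s : ℝ => -a * (z - s)) a s := by
      have := ((hasDerivAt_id s).const_sub z).const_mul (-a)
      simpa using this
    have h2 := (Real.hasDerivAt_exp (-a * (z - s))).comp s h1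
    have h3 := h2.const_mul a⁻¹
    convert h3 using 1
    · rfl
    · rfl
    · rfl
    · field_simp
  have hcont : ContinuousOn (fun s => Real.exp (-a * (z - s))) (Set.uIcc (0:ℝ) z) := by fun_prop
  have := intervalIntegral.integral_eq_sub_of_hasDerivAt hderiv hcont.intervalIntegrable
  rw [this]
  simp [mul_sub]

/-- Lemma 10 of the paper (pointwise-in-`x` version): with `μ(ξ) = |ξ|^{(2α-1)/2}`,
a bounded continuous input `w` on `[0,T)` (`|w| ≤ M`) and
`φ(ξ,t) = ∫₀ᵗ μ(ξ) e^{-(ξ²+η)(t-s)} w(s) ds`, the quantity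
`H(t) = ∫₀ᵗ ∫_ℝ (ξ²+η) (∫₀ˢ φ(ξ,z) dz)² dξ ds` is bounded:
there is a finite constant `C` with `H(t) ≤ C` for all `t ∈ [0,T)`. -/
theorem stmt_10 (α η T M : ℝ) (hα0 : 0 < α) (hα1 : α < 1) (hη : 0 ≤ η)
    (hT : 0 < T) (hM : 0 ≤ M)
    (w : ℝ → ℝ) (hw : ContinuousOn w (Set.Ico 0 T))
    (hwM : ∀ s ∈ Set.Ico (0 : ℝ) T, |w s| ≤ M)
    (φ : ℝ → ℝ → ℝ) (H : ℝ → ℝ)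
    (hφ : ∀ ξ t : ℝ, φ ξ t =
      ∫ s in (0 : ℝ)..t, |ξ| ^ ((2 * α - 1) / 2) * Real.exp (-(ξ ^ 2 + η) * (t - s)) * w s)
    (hH : ∀ t : ℝ, H t =
      ∫ s in (0 : ℝ)..t, ∫ ξ : ℝ, (ξ ^ 2 + η) * (∫ z in (0 : ℝ)..s, φ ξ z) ^ 2) :
    ∃ C : ℝ, ∀ t : ℝ, 0 ≤ t → t < T → H t ≤ C := by
  set g : ℝ → ℝ := fun ξ => M^2*T^2 * (|ξ| ^ (2*α-1) * min T ((ξ^2+η)⁻¹)) with hg_def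
  have hgInt : Integrable g := (my_dom_integrable α η T hα0 hα1 hη hT).const_mul _
  have hgnn : ∀ ξ, 0 ≤ g ξ := by
    intro ξ
    have : (0:ℝ) ≤ min T ((ξ^2+η)⁻¹) := le_min hT.le (by positivity)
    have h1 : (0:ℝ) ≤ |ξ| ^ (2*α-1) := Real.rpow_nonneg (abs_nonneg _) _
    positivity
  -- pointwise bound on the inner integrand
  have hbound : ∀ ξ s : ℝ, 0 ≤ s → s < T →
      (ξ ^ 2 + η) * (∫ z in (0 : ℝ)..s, φ ξ z) ^ 2 ≤ g ξ := by
    intro ξ s hs0 hsT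
    set a : ℝ := ξ^2 + η with ha_def
    have ha0 : 0 ≤ a := by positivity
    rcases eq_or_lt_of_le ha0 with ha | ha
    · rw [← ha]
      simpa using hgnn ξ
    set μξ : ℝ := |ξ| ^ ((2*α-1)/2) with hμ_def
    have hμnn : 0 ≤ μξ := Real.rpow_nonneg (abs_nonneg _) _
    set B : ℝ := min T a⁻¹ with hB_def
    have hBnn : 0 ≤ B := le_min hT.le (by positivity)
    have haB : a * B ≤ 1 := by
      calc a * B ≤ a * a⁻¹ := mul_le_mul_of_nonneg_left (min_le_right _ _) ha0
        _ = 1 := mul_inv_cancel₀ (ne_of_gt ha)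
    -- bound on φ
    have hφb : ∀ z ∈ Set.Ioc (0:ℝ) s, |φ ξ z| ≤ μξ * M * B := by
      intro z hz
      have hz0 : 0 < z := hz.1
      have hzT : z < T := lt_of_le_of_lt hz.2 hsT
      have hwbd : ∀ x ∈ Set.uIoc (0:ℝ) z,
          ‖μξ * Real.exp (-a * (z - x)) * w x‖ ≤ μξ * M := by
        intro x hx
        rw [Set.uIoc_of_le hz0.le] at hx
        have hx0 : 0 < x := hx.1
        have hxz : x ≤ z := hx.2
        have hexp : Real.exp (-a * (z - x)) ≤ 1 := by
          rw [Real.exp_le_one_iff]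
          nlinarith
        have hwx : |w x| ≤ M := hwM x ⟨hx0.le, lt_of_le_of_lt hxz hzT⟩
        have hexp0 : 0 < Real.exp (-a * (z - x)) := Real.exp_pos _
        rw [Real.norm_eq_abs, abs_mul, abs_mul, abs_of_nonneg hμnn,
          abs_of_nonneg hexp0.le]
        calc μξ * Real.exp (-a * (z - x)) * |w x| ≤ μξ * 1 * M := by
              apply mul_le_mul (mul_le_mul_of_nonneg_left hexp hμnn) hwx (abs_nonneg _)
              positivity
          _ = μξ * M := by ring
      -- bound 1: ≤ μξ * M * T
      have b1 : |φ ξ z| ≤ μξ * M * T := by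
        rw [hφ ξ z]
        have := intervalIntegral.norm_integral_le_of_norm_le_const hwbd
        rw [Real.norm_eq_abs] at this
        calc |∫ x in (0:ℝ)..z, μξ * Real.exp (-(ξ^2+η) * (z - x)) * w x|
            ≤ μξ * M * |z - 0| := this
          _ = μξ * M * z := by rw [sub_zero, abs_of_pos hz0]
          _ ≤ μξ * M * T := by
              apply mul_le_mul_of_nonneg_left hzT.le (by positivity)
      -- bound 2: ≤ μξ * M * a⁻¹
      have b2 : |φ ξ z| ≤ μξ * M * a⁻¹ := by
        rw [hφ ξ z]
        have hib : IntervalIntegrable (fun x => μξ * M * Real.exp (-a * (z - x)))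
            volume 0 z := (by fun_prop : Continuous _).intervalIntegrable _ _
        have hae : ∀ᵐ x ∂volume.restrict (Set.uIoc (0:ℝ) z),
            ‖μξ * Real.exp (-(ξ^2+η) * (z - x)) * w x‖ ≤ μξ * M * Real.exp (-a * (z - x)) := by
          rw [Set.uIoc_of_le hz0.le]
          filter_upwards [ae_restrict_mem measurableSet_Ioc] with x hx
          have hx0 : 0 < x := hx.1
          have hwx : |w x| ≤ M := hwM x ⟨hx0.le, lt_of_le_of_lt hx.2 hzT⟩
          have hexp0 : 0 < Real.exp (-a * (z - x)) := Real.exp_pos _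
          rw [Real.norm_eq_abs, abs_mul, abs_mul, abs_of_nonneg hμnn,
            abs_of_nonneg hexp0.le, ha_def]
          calc μξ * Real.exp (-(ξ^2+η) * (z - x)) * |w x|
              ≤ μξ * Real.exp (-(ξ^2+η) * (z - x)) * M := by
                apply mul_le_mul_of_nonneg_left hwx (by positivity)
            _ = μξ * M * Real.exp (-(ξ^2+η) * (z - x)) := by ring
        have := intervalIntegral.norm_integral_le_abs_of_norm_le hae hib
        rw [Real.norm_eq_abs] at this
        refine le_trans this ?_
        rw [intervalIntegral.integral_const_mul, my_exp_integral a z ha]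
        have he1 : Real.exp (-a * z) ≤ 1 := by
          rw [Real.exp_le_one_iff]; nlinarith
        have he0 : 0 < Real.exp (-a * z) := Real.exp_pos _
        have hnn : (0:ℝ) ≤ a⁻¹ * (1 - Real.exp (-a*z)) := by
          apply mul_nonneg (by positivity); linarith
        rw [abs_of_nonneg (by positivity)]
        calc μξ * M * (a⁻¹ * (1 - Real.exp (-a*z))) ≤ μξ * M * (a⁻¹ * 1) := by
              apply mul_le_mul_of_nonneg_left ?_ (by positivity)
              apply mul_le_mul_of_nonneg_left ?_ (by positivity)
              linarith
          _ = μξ * M * a⁻¹ := by ring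
      rcases min_cases T a⁻¹ with ⟨hmin, _⟩ | ⟨hmin, _⟩
      · rw [hB_def, hmin]; exact b1
      · rw [hB_def, hmin]; exact b2
    -- bound on Φ = ∫₀ˢ φ
    have hΦ : |∫ z in (0:ℝ)..s, φ ξ z| ≤ μξ * M * B * s := by
      have hb : ∀ z ∈ Set.uIoc (0:ℝ) s, ‖φ ξ z‖ ≤ μξ * M * B := by
        intro z hz
        rw [Set.uIoc_of_le hs0] at hz
        exact hφb z hz
      have := intervalIntegral.norm_integral_le_of_norm_le_const hb
      rw [Real.norm_eq_abs, sub_zero, abs_of_nonneg hs0] at this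
      exact this
    have hΦnn : (0:ℝ) ≤ μξ * M * B * s := by positivity
    have hμsq : μξ^2 = |ξ| ^ (2*α-1) := by
      rw [hμ_def, ← Real.rpow_natCast (|ξ| ^ ((2*α-1)/2)) 2, ← Real.rpow_mul (abs_nonneg ξ)]
      norm_num
    calc (ξ^2 + η) * (∫ z in (0:ℝ)..s, φ ξ z)^2
        ≤ a * (μξ * M * B * s)^2 := by
          apply mul_le_mul_of_nonneg_left ?_ ha0
          rw [← sq_abs]
          exact pow_le_pow_left₀ (abs_nonneg _) hΦ 2
      _ ≤ a * (μξ * M * B * T)^2 := by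
          apply mul_le_mul_of_nonneg_left ?_ ha0
          apply pow_le_pow_left₀ hΦnn
          apply mul_le_mul_of_nonneg_left hsT.le (by positivity)
      _ = M^2 * T^2 * (μξ^2 * (a * B * B)) := by ring
      _ ≤ M^2 * T^2 * (μξ^2 * (1 * B)) := by
          apply mul_le_mul_of_nonneg_left ?_ (by positivity)
          apply mul_le_mul_of_nonneg_left ?_ (by positivity)
          exact mul_le_mul_of_nonneg_right haB hBnn
      _ = g ξ := by rw [hg_def, hμsq]; ring
  -- the inner integral is bounded by ∫ g
  set K : ℝ := ∫ ξ, g ξ with hK_def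
  have hKnn : 0 ≤ K := integral_nonneg hgnn
  have hinner : ∀ s : ℝ, 0 ≤ s → s < T →
      (∫ ξ : ℝ, (ξ ^ 2 + η) * (∫ z in (0 : ℝ)..s, φ ξ z) ^ 2) ≤ K := by
    intro s hs0 hsT
    by_cases hfi : Integrable (fun ξ : ℝ => (ξ ^ 2 + η) * (∫ z in (0 : ℝ)..s, φ ξ z) ^ 2)
    · exact integral_mono hfi hgInt (fun ξ => hbound ξ s hs0 hsT)
    · rw [integral_undef hfi]; exact hKnn
  refine ⟨T * K, fun t ht0 htT => ?_⟩
  rw [hH t]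
  by_cases hFi : IntervalIntegrable
      (fun s => ∫ ξ : ℝ, (ξ ^ 2 + η) * (∫ z in (0 : ℝ)..s, φ ξ z) ^ 2) volume 0 t
  · calc (∫ s in (0:ℝ)..t, ∫ ξ : ℝ, (ξ ^ 2 + η) * (∫ z in (0 : ℝ)..s, φ ξ z) ^ 2)
        ≤ ∫ _ in (0:ℝ)..t, K := by
          apply intervalIntegral.integral_mono_on ht0 hFi intervalIntegrable_const
          intro s hs
          exact hinner s hs.1 (lt_of_le_of_lt hs.2 htT)
      _ = t * K := by simp [smul_eq_mul]
      _ ≤ T * K := mul_le_mul_of_nonneg_right htT.le hKnn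
  · rw [intervalIntegral.integral_undef hFi]
    positivity
end
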